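/- Let Δ be an irreducible reduced crystallographic root system, normalized so that every long root has squared length 2, and assume every root α satisfies (α,α) = 1 or (α,α) = 2 (i.e., Δ is not of type G2). Let δ ∈ Δ be a long root, set W_δ = {α ∈ Δ : δ − α ∈ Δ}, and let Γ ⊆ Δ be any subset of roots with δ ∈ Γ. Then for α, β ∈ W_δ, the sum α + β belongs to Γ if and only if α + β = δ. -/

import Mathlib

open scoped RealInnerProductSpace

/-- In an irreducible reduced crystallographic root system
(normalized so long roots have squared length 2, no G₂), let `δ` be a long root,
`W_δ = {α ∈ Δ : δ - α ∈ Δ}`, and `Γ ⊆ Δ` any subset of roots with `δ ∈ Γ`.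
Then for `α, β ∈ W_δ`, the sum `α + β` belongs to `Γ` iff `α + β = δ`. -/
theorem sum_in_Wdelta_mem_Gamma_iff
    {E : Type*} [NormedAddCommGroup E] [InnerProductSpace ℝ E] [FiniteDimensional ℝ E]
    (Δ : Set E) (hfin : Δ.Finite)
    (hspan : Submodule.span ℝ Δ = ⊤)
    (h0 : (0 : E) ∉ Δ)
    (hred : ∀ α ∈ Δ, ∀ c : ℝ, c • α ∈ Δ → c • α = α ∨ c • α = -α)
    (hint : ∀ α ∈ Δ, ∀ β ∈ Δ, ∃ n : ℤ, 2 * ⟪β, α⟫ / ⟪α, α⟫ = (n : ℝ))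
    (hrefl : ∀ α ∈ Δ, ∀ β ∈ Δ, β - (2 * ⟪β, α⟫ / ⟪α, α⟫) • α ∈ Δ)
    (hirr : ¬ ∃ A B : Set E, A.Nonempty ∧ B.Nonempty ∧ A ∪ B = Δ ∧ A ∩ B = ∅ ∧
      ∀ a ∈ A, ∀ b ∈ B, ⟪a, b⟫ = 0)
    (hnorm : ∀ δ ∈ Δ, (∀ α ∈ Δ, ⟪α, α⟫ ≤ ⟪δ, δ⟫) → ⟪δ, δ⟫ = 2)
    (hlen : ∀ α ∈ Δ, ⟪α, α⟫ = 1 ∨ ⟪α, α⟫ = 2)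
    (δ : E) (hδ : δ ∈ Δ) (hδlong : ∀ β ∈ Δ, ⟪β, β⟫ ≤ ⟪δ, δ⟫)
    (Γ : Set E) (hΓ : Γ ⊆ Δ) (hδΓ : δ ∈ Γ)
    (α β : E)
    (hα : α ∈ {x ∈ Δ | δ - x ∈ Δ}) (hβ : β ∈ {x ∈ Δ | δ - x ∈ Δ}) :
    α + β ∈ Γ ↔ α + β = δ := by

  have hδδ : ⟪δ, δ⟫ = 2 := hnorm δ hδ hδlong
  have key : ∀ x, x ∈ Δ → δ - x ∈ Δ → ⟪x, δ⟫ = 1 := by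
    intro x hx hdx
    obtain ⟨n, hn⟩ := hint δ hδ x hx
    rw [hδδ] at hn
    have hxδ : ⟪x, δ⟫ = n := by
      field_simp at hn; linarith
    have hxne : x ≠ 0 := fun h => h0 (h ▸ hx)
    have hxx_pos : 0 < ⟪x, x⟫ := not_le.1 fun h => hxne (real_inner_self_nonpos.1 h)
    have hdxne : δ - x ≠ 0 := fun h => h0 (h ▸ hdx)
    have hdx_pos : 0 < ⟪δ - x, δ - x⟫ := not_le.1 fun h => hdxne (real_inner_self_nonpos.1 h)
    have hexp : ⟪δ - x, δ - x⟫ = ⟪δ, δ⟫ - 2 * ⟪x, δ⟫ + ⟪x, x⟫ := by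
      simp only [inner_sub_left, inner_sub_right, real_inner_comm x δ]; ring
    have hle : ⟪δ - x, δ - x⟫ ≤ 2 := hδδ ▸ hδlong _ hdx
    have hxx2 : ⟪x, x⟫ ≤ 2 := hδδ ▸ hδlong _ hx
    have hn1 : (1 : ℝ) ≤ n := by
      have : 0 < 2 * (n : ℝ) := by nlinarith
      have : (0 : ℤ) < n := by exact_mod_cast (by nlinarith : (0:ℝ) < n)
      exact_mod_cast this
    have hn2 : (n : ℝ) < 2 := by
      by_contra h
      push_neg at h
      nlinarith
    have : n = 1 := by
      have h1 : (1 : ℤ) ≤ n := by exact_mod_cast hn1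
      have h2 : n < 2 := by exact_mod_cast hn2
      omega
    rw [hxδ, this]; norm_num
  constructor
  · intro hγ
    have hγΔ : α + β ∈ Δ := hΓ hγ
    have hαδ : ⟪α, δ⟫ = 1 := key α hα.1 hα.2
    have hβδ : ⟪β, δ⟫ = 1 := key β hβ.1 hβ.2
    have hsum : ⟪α + β, δ⟫ = 2 := by rw [inner_add_left, hαδ, hβδ]; norm_num
    have hγγ : ⟪α + β, α + β⟫ ≤ 2 := hδδ ▸ hδlong _ hγΔ
    have hexp : ⟪α + β - δ, α + β - δ⟫ = ⟪α + β, α + β⟫ - 2 * ⟪α + β, δ⟫ + ⟪δ, δ⟫ := by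
      simp only [inner_sub_left, inner_sub_right, real_inner_comm δ (α + β)]; ring
    have hzero : ⟪α + β - δ, α + β - δ⟫ ≤ 0 := by rw [hexp, hsum, hδδ]; linarith
    have := real_inner_self_nonneg (x := α + β - δ)
    have h0' : ⟪α + β - δ, α + β - δ⟫ = 0 := le_antisymm hzero this
    have := inner_self_eq_zero.1 h0'
    exact sub_eq_zero.1 this
  · intro h; rw [h]; exact hδΓ
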